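/- For every β ∈ {⊤,⊥}^{m−1} and every π ∈ S_{m,n}, one has G_π^{(β_1,…,β_{m−1},⊤)} = G_π^{(β_1,…,β_{m−1},⊥)}; that is, the generic pipe dream polynomial G_π^β does not depend on the last letter of the hybridization β. -/

import Mathlib

/-! # Hybrid generic pipe dreams -/

/-- Tiles: sets of pipe segments in a unit cell. `wn` = {W–N}, `se` = {S–E},
`wnse` = {W–N, S–E}, `en` = {E–N}, `sw` = {S–W}, `ensw` = {E–N, S–W}, `we` = {W–E},
`sn` = {S–N}, `wesn` = {W–E, S–N} (crossing), `blank` = ∅. -/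
inductive Tile
  | blank | wn | se | wnse | en | sw | ensw | we | sn | wesn
  deriving DecidableEq

instance : Fintype Tile where
  elems := {.blank, .wn, .se, .wnse, .en, .sw, .ensw, .we, .sn, .wesn}
  complete := fun x => by cases x <;> simp

namespace Tile

/-- The West edge is occupied. -/
def occW : Tile → Bool
  | wn | wnse | we | wesn | sw | ensw => true
  | _ => false

/-- The East edge is occupied. -/
def occE : Tile → Bool
  | se | wnse | we | wesn | en | ensw => true
  | _ => false

/-- The North edge is occupied. -/
def occN : Tile → Bool
  | wn | wnse | sn | wesn | en | ensw => true
  | _ => false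

/-- The South edge is occupied. -/
def occS : Tile → Bool
  | se | wnse | sn | wesn | sw | ensw => true
  | _ => false

/-- Elbow tiles. -/
def isElbow : Tile → Bool
  | wn | se | wnse | en | sw | ensw => true
  | _ => false

/-- Straight tiles. -/
def isStraight : Tile → Bool
  | we | sn | wesn => true
  | _ => false

/-- Left-right mirror image of a tile (exchanging the roles of the E and W edges). -/
def mirror : Tile → Tile
  | wn => en | en => wn | se => sw | sw => se | wnse => ensw | ensw => wnse
  | t => t

end Tile

/-- The allowed tiles in a row of type `⊤` (`true`) resp. `⊥` (`false`). -/
def allowedIn (rt : Bool) (t : Tile) : Prop :=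
  if rt then
    t = .blank ∨ t = .wn ∨ t = .se ∨ t = .wnse ∨ t = .we ∨ t = .sn ∨ t = .wesn
  else
    t = .blank ∨ t = .en ∨ t = .sw ∨ t = .ensw ∨ t = .we ∨ t = .sn ∨ t = .wesn

section Routing

variable {ι : Type*}

/-- In a `⊤`-row tile, the pipe exiting East given the pipes entering from West and South. -/
def eOutT : Tile → Option ι → Option ι → Option ι
  | .se, _, s => s
  | .wnse, _, s => s
  | .we, w, _ => w
  | .wesn, w, _ => w
  | _, _, _ => none

/-- In a `⊤`-row tile, the pipe exiting North given the pipes entering from West and South. -/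
def nOutT : Tile → Option ι → Option ι → Option ι
  | .wn, w, _ => w
  | .wnse, w, _ => w
  | .sn, _, s => s
  | .wesn, _, s => s
  | _, _, _ => none

/-- Tracing a `⊤`-type row left to right: the pipe on the vertical edge left of column `j`,
where `bot j` is the pipe entering column `j` from the South and `enter` enters from the West. -/
def hTrace (t : ℕ → Tile) (bot : ℕ → Option ι) (enter : Option ι) : ℕ → Option ι
  | 0 => enter
  | j + 1 => eOutT (t j) (hTrace t bot enter j) (bot j)

/-- The pipe exiting North from column `j` of a `⊤`-type row. -/
def topOutT (t : ℕ → Tile) (bot : ℕ → Option ι) (enter : Option ι) (j : ℕ) : Option ι :=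
  nOutT (t j) (hTrace t bot enter j) (bot j)

/-- The pipe exiting North from column `j` of a `⊥`-type row with `n` columns (the pipe
`enter` enters from the East); computed by mirroring. -/
def topOutB (n : ℕ) (t : ℕ → Tile) (bot : ℕ → Option ι) (enter : Option ι) (j : ℕ) :
    Option ι :=
  topOutT (fun j' => (t (n - 1 - j')).mirror) (fun j' => bot (n - 1 - j')) enter (n - 1 - j)

/-- The pipe exiting North from column `j` of a row of type `rt`. -/
def rowTop (rt : Bool) (n : ℕ) (t : ℕ → Tile) (bot : ℕ → Option ι) (enter : Option ι)
    (j : ℕ) : Option ι :=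
  if rt then topOutT t bot enter j else topOutB n t bot enter j

end Routing

/-- The row-`i` tiles of a filling, as a `ℕ`-indexed family. -/
def tilesOf {m n : ℕ} (f : Fin m → Fin n → Tile) (i : Fin m) : ℕ → Tile :=
  fun j => if h : j < n then f i ⟨j, h⟩ else Tile.blank

/-- The pipes (labeled by the row in which they enter) crossing the horizontal line `m - r`
of the grid (so `r = 0` is the South boundary and `r = m` the North boundary). -/
def lineState (m n : ℕ) (β : Fin m → Bool) (f : Fin m → Fin n → Tile) :
    ℕ → ℕ → Option (Fin m)
  | 0, _ => none
  | r + 1, j =>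
    if h : r < m then
      rowTop (β ⟨m - 1 - r, by omega⟩) n (tilesOf f ⟨m - 1 - r, by omega⟩)
        (fun j' => lineState m n β f r j') (some ⟨m - 1 - r, by omega⟩) j
    else lineState m n β f r j

/-- The pipe exiting through the North boundary at column `j`. -/
def northExit (m n : ℕ) (β : Fin m → Bool) (f : Fin m → Fin n → Tile) (j : Fin n) :
    Option (Fin m) :=
  lineState m n β f m (j : ℕ)

private theorem filter_card_lt {m : ℕ} (i : Fin m) (p : Fin m → Prop) [DecidablePred p]
    (h : ∀ a, p a → a ≠ i) : (Finset.univ.filter p).card < m := by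
  have hsub : Finset.univ.filter p ⊆ Finset.univ.erase i := fun a ha =>
    Finset.mem_erase.mpr ⟨h a (Finset.mem_filter.mp ha).2, Finset.mem_univ a⟩
  calc (Finset.univ.filter p).card ≤ (Finset.univ.erase i).card := Finset.card_le_card hsub
    _ < Finset.univ.card := Finset.card_erase_lt_of_mem (Finset.mem_univ i)
    _ = m := by simp

/-- The number `φ_β(i)` (0-indexed) of the pipe entering in row `i`: pipes are numbered
counterclockwise starting from the NW corner. -/
def pipeNo {m : ℕ} (β : Fin m → Bool) (i : Fin m) : Fin m :=
  if hβ : β i then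
    ⟨(Finset.univ.filter (fun a => a < i ∧ β a)).card,
      filter_card_lt i _ (fun a ha => ne_of_lt ha.1)⟩
  else
    ⟨(Finset.univ.filter (fun a : Fin m => β a)).card +
        (Finset.univ.filter (fun a : Fin m => i < a ∧ ¬(β a : Prop))).card, by
      have hd : Disjoint (Finset.univ.filter (fun a : Fin m => (β a : Prop)))
          (Finset.univ.filter (fun a : Fin m => i < a ∧ ¬(β a : Prop))) := by
        rw [Finset.disjoint_left]
        intro a ha hb
        exact (Finset.mem_filter.mp hb).2.2 (Finset.mem_filter.mp ha).2
      rw [← Finset.card_union_of_disjoint hd, ← Finset.filter_or]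
      refine filter_card_lt i _ ?_
      rintro a (h1 | ⟨h2, _⟩)
      · rintro rfl; exact hβ h1
      · exact ne_of_gt h2⟩

/-- A hybrid generic pipe dream of type `β`: allowed tiles, matching of occupied edges,
unoccupied South boundary, and entering conditions on the West/East boundaries. -/
def IsHGPD (m n : ℕ) (β : Fin m → Bool) (f : Fin m → Fin n → Tile) : Prop :=
  (∀ i j, allowedIn (β i) (f i j)) ∧
  (∀ (i : Fin m) (j : Fin n) (h : (j : ℕ) + 1 < n),
    (f i j).occE = (f i ⟨j + 1, h⟩).occW) ∧
  (∀ (i : Fin m) (h : (i : ℕ) + 1 < m) (j : Fin n),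
    (f i j).occS = (f ⟨i + 1, h⟩ j).occN) ∧
  (∀ (i : Fin m) (j : Fin n), (i : ℕ) + 1 = m → (f i j).occS = false) ∧
  (∀ (i : Fin m) (j : Fin n), (j : ℕ) = 0 → (f i j).occW = β i) ∧
  (∀ (i : Fin m) (j : Fin n), (j : ℕ) + 1 = n → (f i j).occE = !β i)

/-- The pipe dream has connectivity `π`: the pipe numbered `k` exits the North side in
column `π(k)`; equivalently the pipe entering in row `i` exits in column `π(φ_β(i))`. -/
def Connectivity (m n : ℕ) (β : Fin m → Bool) (f : Fin m → Fin n → Tile)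
    (π : Fin m ↪ Fin n) : Prop :=
  ∀ i : Fin m, northExit m n β f (π (pipeNo β i)) = some i

/-! ## Weights -/

/-- Variable set for `ℤ[x_1,…,x_m,y_1,…,y_n,A,B]`: `none` is `B`, `some (inl i)` is `x_i`,
`some (inr (inl j))` is `y_j`, `some (inr (inr ()))` is `A`. -/
abbrev PDVar (m n : ℕ) := Option (Fin m ⊕ (Fin n ⊕ Unit))

noncomputable def xP (m n : ℕ) (i : Fin m) : MvPolynomial (PDVar m n) ℤ :=
  MvPolynomial.X (some (Sum.inl i))

noncomputable def yP (m n : ℕ) (j : Fin n) : MvPolynomial (PDVar m n) ℤ :=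
  MvPolynomial.X (some (Sum.inr (Sum.inl j)))

noncomputable def AP (m n : ℕ) : MvPolynomial (PDVar m n) ℤ :=
  MvPolynomial.X (some (Sum.inr (Sum.inr ())))

noncomputable def BP (m n : ℕ) : MvPolynomial (PDVar m n) ℤ :=
  MvPolynomial.X none

/-- The weight of the tile in cell `(i,j)` of a row of type `rt` whose entering pipe is
numbered `k`. -/
noncomputable def tileWt (m n : ℕ) (rt : Bool) (t : Tile) (k : Fin m) (j : Fin n) :
    MvPolynomial (PDVar m n) ℤ :=
  if t.isElbow then AP m n + BP m n
  else if t.isStraight then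
    (if rt then AP m n + xP m n k - yP m n j else BP m n - xP m n k + yP m n j)
  else
    (if rt then BP m n - xP m n k + yP m n j else AP m n + xP m n k - yP m n j)

/-- The weight of a pipe dream: the product of the weights of its tiles. -/
noncomputable def pdWeight (m n : ℕ) (β : Fin m → Bool) (f : Fin m → Fin n → Tile) :
    MvPolynomial (PDVar m n) ℤ :=
  ∏ i : Fin m, ∏ j : Fin n, tileWt m n (β i) (f i j) (pipeNo β i) j

open Classical in
/-- The generic pipe dream polynomial `G_π^β`: the sum of the weights of all hybrid generic
pipe dreams of type `β` with connectivity `π`. -/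
noncomputable def GPD (m n : ℕ) (β : Fin m → Bool) (π : Fin m ↪ Fin n) :
    MvPolynomial (PDVar m n) ℤ :=
  ∑ f ∈ Finset.univ.filter
      (fun f : Fin m → Fin n → Tile => IsHGPD m n β f ∧ Connectivity m n β f π),
    pdWeight m n β f

section Routing2
variable {ι : Type*}

lemma hTrace_congr (t : ℕ → Tile) (b b' : ℕ → Option ι) (e : Option ι) :
    ∀ j, (∀ k, k < j → b k = b' k) → hTrace t b e j = hTrace t b' e j
  | 0, _ => rfl
  | j + 1, h => by
    simp only [hTrace]
    rw [hTrace_congr t b b' e j (fun k hk => h k (Nat.lt_succ_of_lt hk)),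
      h j (Nat.lt_succ_self j)]

lemma topOutT_congr (t : ℕ → Tile) (b b' : ℕ → Option ι) (e : Option ι) (j : ℕ)
    (h : ∀ k, k ≤ j → b k = b' k) : topOutT t b e j = topOutT t b' e j := by
  unfold topOutT
  rw [hTrace_congr t b b' e j (fun k hk => h k hk.le), h j le_rfl]

lemma topOutB_congr (n : ℕ) (hn : 1 ≤ n) (t : ℕ → Tile) (b b' : ℕ → Option ι)
    (e : Option ι) (j : ℕ) (h : ∀ k, k < n → b k = b' k) :
    topOutB n t b e j = topOutB n t b' e j := by
  unfold topOutB
  exact topOutT_congr _ _ _ _ _ (fun k _ => h (n - 1 - k) (by omega))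

lemma topOutT_blank (t : ℕ → Tile) (b : ℕ → Option ι) (e : Option ι) (j : ℕ)
    (h : t j = .blank) : topOutT t b e j = none := by
  unfold topOutT; rw [h]; rfl

lemma rowTop_congr (rt : Bool) (n : ℕ) (hn : 1 ≤ n) (t : ℕ → Tile)
    (b b' : ℕ → Option ι) (e : Option ι) (j : ℕ) (hj : j < n)
    (h : ∀ k, k < n → b k = b' k) :
    rowTop rt n t b e j = rowTop rt n t b' e j := by
  cases rt
  · simp only [rowTop, Bool.false_eq_true, if_false]
    exact topOutB_congr n hn t b b' e j h
  · simp only [rowTop, if_true]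
    exact topOutT_congr t b b' e j (fun k hk => h k (lt_of_le_of_lt hk hj))

lemma hTrace_of_we (t : ℕ → Tile) (b : ℕ → Option ι) (e : Option ι) (c : ℕ)
    (hw : ∀ k, k < c → t k = .we) : ∀ j, j ≤ c → hTrace t b e j = e
  | 0, _ => rfl
  | j + 1, h => by
    simp only [hTrace]
    rw [hw j (by omega), hTrace_of_we t b e c hw j (by omega)]
    rfl

lemma hTrace_none (t : ℕ → Tile) (b : ℕ → Option ι) (e : Option ι) (c J : ℕ)
    (hc : t c = .wn) (hb : ∀ k, c < k → k ≤ J → t k = .blank) :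
    ∀ j, c < j → j ≤ J → hTrace t b e j = none
  | 0, h1, _ => absurd h1 (Nat.not_lt_zero c)
  | j + 1, h1, h2 => by
    simp only [hTrace]
    rcases Nat.lt_or_ge c j with h | h
    · rw [hb j h (by omega)]; rfl
    · have : j = c := by omega
      subst this
      rw [hc]; rfl

lemma topOutT_shape (t : ℕ → Tile) (b : ℕ → Option ι) (e : Option ι) (c J : ℕ)
    (hcJ : c ≤ J) (hw : ∀ k, k < c → t k = .we) (hc : t c = .wn)
    (hb : ∀ k, c < k → k ≤ J → t k = .blank) (j : ℕ) (hj : j ≤ J) :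
    topOutT t b e j = if j = c then e else none := by
  unfold topOutT
  rcases lt_trichotomy j c with h | rfl | h
  · rw [hw j h, if_neg h.ne]; rfl
  · rw [hc, if_pos rfl, hTrace_of_we t b e j hw j le_rfl]; rfl
  · rw [hb j h hj, if_neg h.ne']
    rw [hTrace_none t b e c J hc (fun k h1 h2 => hb k h1 h2) j h hj]
    rfl

end Routing2

namespace HGPDaux

/-- The left-right flip of a bottom-row tile. -/
def g : Tile → Tile
  | .blank => .we
  | .we => .blank
  | .wn => .en
  | .en => .wn
  | t => t

lemma g_invol (t : Tile) : g (g t) = t := by cases t <;> rfl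

/-- Flip the bottom row of a filling. -/
def Ff (m n : ℕ) (f : Fin m → Fin n → Tile) : Fin m → Fin n → Tile :=
  fun i j => if (i : ℕ) + 1 = m then g (f i j) else f i j

lemma Ff_invol (m n : ℕ) (f : Fin m → Fin n → Tile) : Ff m n (Ff m n f) = f := by
  funext i j
  simp only [Ff]
  split <;> simp [g_invol]

lemma Ff_ne (m n : ℕ) (f : Fin m → Fin n → Tile) (i : Fin m) (hi : (i : ℕ) + 1 ≠ m) :
    Ff m n f i = f i := by funext j; simp [Ff, hi]

lemma Ff_bot (m n : ℕ) (f : Fin m → Fin n → Tile) (i : Fin m) (hi : (i : ℕ) + 1 = m)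
    (j : Fin n) : Ff m n f i j = g (f i j) := by simp [Ff, hi]

/-- The four tiles that can appear in a bottom row. -/
def Quad (t : Tile) : Prop := t = .blank ∨ t = .wn ∨ t = .we ∨ t = .en

lemma quad_of_allowed {rt : Bool} {t : Tile} (h1 : allowedIn rt t) (h2 : t.occS = false) :
    Quad t := by
  cases rt <;> simp only [allowedIn, if_true, if_false, Bool.false_eq_true] at h1 <;>
    rcases h1 with rfl | rfl | rfl | rfl | rfl | rfl | rfl <;>
    simp_all [Tile.occS, Quad]

lemma allowed_g {rt : Bool} {t : Tile} (h1 : allowedIn rt t) (h2 : t.occS = false) :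
    allowedIn (!rt) (g t) := by
  have hq := quad_of_allowed h1 h2
  cases rt <;> rcases hq with rfl | rfl | rfl | rfl <;>
    simp_all [allowedIn, g]

lemma occW_g {t : Tile} (h : Quad t) : (g t).occW = !t.occW := by
  rcases h with rfl | rfl | rfl | rfl <;> rfl

lemma occE_g {t : Tile} (h : Quad t) : (g t).occE = !t.occE := by
  rcases h with rfl | rfl | rfl | rfl <;> rfl

lemma occN_g {t : Tile} (h : Quad t) : (g t).occN = t.occN := by
  rcases h with rfl | rfl | rfl | rfl <;> rfl

lemma occS_g {t : Tile} (h : Quad t) : (g t).occS = t.occS := by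
  rcases h with rfl | rfl | rfl | rfl <;> rfl

/-- Shape of the bottom row of a `⊤`-type HGPD: `we^c, wn, blank^*`. -/
def ShapeT (c : ℕ) (t : ℕ → Tile) : Prop :=
  (∀ k, k < c → t k = .we) ∧ t c = .wn ∧ (∀ k, c < k → t k = .blank)

/-- Shape of the bottom row of a `⊥`-type HGPD: `blank^c, en, we^{n-1-c}, blank^*`. -/
def ShapeB (n c : ℕ) (t : ℕ → Tile) : Prop :=
  (∀ k, k < c → t k = .blank) ∧ t c = .en ∧ (∀ k, c < k → k < n → t k = .we) ∧
    (∀ k, n ≤ k → t k = .blank)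

lemma shapeT_of_HGPD {m n : ℕ} (hn : 1 ≤ n) {β : Fin m → Bool} {f : Fin m → Fin n → Tile}
    (hf : IsHGPD m n β f) (i : Fin m) (hi : (i : ℕ) + 1 = m) (hβi : β i = true) :
    ∃ c, c < n ∧ ShapeT c (tilesOf f i) := by
  obtain ⟨hall, hEW, -, hS, hW, hE⟩ := hf
  set T := tilesOf f i with hT
  have hTval : ∀ j (h : j < n), T j = f i ⟨j, h⟩ := by
    intro j h; simp [hT, tilesOf, h]
  have hTblank : ∀ j, n ≤ j → T j = .blank := by
    intro j h; simp [hT, tilesOf, Nat.not_lt.mpr h]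
  have triple : ∀ j (h : j < n), T j = .blank ∨ T j = .wn ∨ T j = .we := by
    intro j h
    have h1 := hall i ⟨j, h⟩
    rw [hβi] at h1
    have h2 := hS i ⟨j, h⟩ hi
    have h1' : allowedIn true (T j) := by rw [hTval j h]; exact h1
    have hq : Quad (T j) := by rw [hTval j h]; exact quad_of_allowed h1 h2
    rcases hq with h' | h' | h' | h'
    · exact Or.inl h'
    · exact Or.inr (Or.inl h')
    · exact Or.inr (Or.inr h')
    · rw [h'] at h1'; simp [allowedIn] at h1'
  have hW0 : (T 0).occW = true := by
    rw [hTval 0 hn]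
    rw [hW i ⟨0, hn⟩ rfl, hβi]
  have hedge : ∀ j, j + 1 < n → (T j).occE = (T (j + 1)).occW := by
    intro j h
    rw [hTval j (by omega), hTval (j + 1) h]
    exact hEW i ⟨j, by omega⟩ h
  have hlast : (T (n - 1)).occE = false := by
    rw [hTval (n - 1) (by omega), hE i ⟨n - 1, by omega⟩ (by simp; omega), hβi]
    rfl
  have aux : ∀ j, j < n →
      (∀ k, k ≤ j → T k = .we) ∨
      (∃ c, c ≤ j ∧ (∀ k, k < c → T k = .we) ∧ T c = .wn ∧
        (∀ k, c < k → k ≤ j → T k = .blank)) := by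
    intro j
    induction j with
    | zero =>
      intro h0
      rcases triple 0 h0 with h | h | h
      · rw [h] at hW0; simp [Tile.occW] at hW0
      · exact Or.inr ⟨0, le_rfl, fun k hk => absurd hk (Nat.not_lt_zero k), h,
          fun k h1 h2 => by omega⟩
      · exact Or.inl (fun k hk => by rw [Nat.le_zero.mp hk, h])
    | succ j ih =>
      intro hjn
      have hj : j < n := by omega
      have hed := hedge j hjn
      rcases ih hj with hL | ⟨c, hc, hw, hwn, hb⟩
      · rw [hL j le_rfl] at hed
        rcases triple (j + 1) hjn with h | h | h
        · rw [h] at hed; simp [Tile.occE, Tile.occW] at hed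
        · exact Or.inr ⟨j + 1, le_rfl, fun k hk => hL k (by omega), h,
            fun k h1 h2 => by omega⟩
        · refine Or.inl (fun k hk => ?_)
          rcases Nat.lt_or_ge k (j + 1) with h' | h'
          · exact hL k (by omega)
          · rw [show k = j + 1 by omega, h]
      · have hEj : (T j).occE = false := by
          rcases Nat.lt_or_ge c j with h' | h'
          · rw [hb j h' le_rfl]; rfl
          · rw [show j = c by omega, hwn]; rfl
        rw [hEj] at hed
        rcases triple (j + 1) hjn with h | h | h
        · refine Or.inr ⟨c, by omega, hw, hwn, fun k h1 h2 => ?_⟩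
          rcases Nat.lt_or_ge k (j + 1) with h' | h'
          · exact hb k h1 (by omega)
          · rw [show k = j + 1 by omega, h]
        · rw [h] at hed; simp [Tile.occW] at hed
        · rw [h] at hed; simp [Tile.occW] at hed
  rcases aux (n - 1) (by omega) with hL | ⟨c, hc, hw, hwn, hb⟩
  · rw [hL (n - 1) le_rfl] at hlast; simp [Tile.occE] at hlast
  · refine ⟨c, by omega, hw, hwn, fun k hk => ?_⟩
    rcases Nat.lt_or_ge k n with h' | h'
    · exact hb k hk (by omega)
    · exact hTblank k h'

lemma shapeB_of_shapeT {m n : ℕ} {f : Fin m → Fin n → Tile} {i : Fin m}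
    (hi : (i : ℕ) + 1 = m) {c : ℕ} (hc : c < n) (h : ShapeT c (tilesOf f i)) :
    ShapeB n c (tilesOf (Ff m n f) i) := by
  obtain ⟨hw, hwn, hb⟩ := h
  have key : ∀ j (hj : j < n), tilesOf (Ff m n f) i j = g (tilesOf f i j) := by
    intro j hj
    simp [tilesOf, hj, Ff_bot m n f i hi]
  refine ⟨fun k hk => ?_, ?_, fun k h1 h2 => ?_, fun k hk => ?_⟩
  · rw [key k (by omega), hw k hk]; rfl
  · rw [key c hc, hwn]; rfl
  · rw [key k h2, hb k h1]; rfl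
  · simp [tilesOf, Nat.not_lt.mpr hk]

lemma rowTop_shapeT {ι : Type*} {c : ℕ} {t : ℕ → Tile} (h : ShapeT c t)
    (b : ℕ → Option ι) (e : Option ι) (j : ℕ) :
    rowTop true n t b e j = if j = c then e else none := by
  obtain ⟨hw, hwn, hb⟩ := h
  simp only [rowTop, if_true]
  exact topOutT_shape t b e c (max c j) (le_max_left c j) hw hwn
    (fun k h1 _ => hb k h1) j (le_max_right c j)

lemma rowTop_shapeB {ι : Type*} {n c : ℕ} {t : ℕ → Tile} (hn : 1 ≤ n) (hc : c < n)
    (h : ShapeB n c t) (b : ℕ → Option ι) (e : Option ι) (j : ℕ) (hj : j < n) :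
    rowTop false n t b e j = if j = c then e else none := by
  obtain ⟨hbl, hen, hwe, hbl2⟩ := h
  simp only [rowTop, Bool.false_eq_true, if_false]
  unfold topOutB
  rw [topOutT_shape _ _ e (n - 1 - c) (n - 1) (by omega)
    (fun k hk => by rw [hwe (n - 1 - k) (by omega) (by omega)]; rfl)
    (by rw [show n - 1 - (n - 1 - c) = c by omega, hen]; rfl)
    (fun k h1 h2 => by rw [hbl (n - 1 - k) (by omega)]; rfl)
    (n - 1 - j) (by omega)]
  by_cases h' : j = c
  · subst h'; rw [if_pos rfl, if_pos rfl]
  · rw [if_neg (by omega), if_neg h']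

lemma tilesOf_Ff_ne {m n : ℕ} (f : Fin m → Fin n → Tile) (i : Fin m)
    (hi : (i : ℕ) + 1 ≠ m) : tilesOf (Ff m n f) i = tilesOf f i := by
  funext j; unfold tilesOf; rw [Ff_ne m n f i hi]

lemma lineState_eq (m n : ℕ) (hm : 1 ≤ m) (hn : 1 ≤ n) (β β' : Fin m → Bool)
    (hβi : β ⟨m - 1, Nat.sub_lt hm Nat.one_pos⟩ = true)
    (hβ'i : β' ⟨m - 1, Nat.sub_lt hm Nat.one_pos⟩ = false)
    (hpre : ∀ i : Fin m, (i : ℕ) + 1 ≠ m → β i = β' i)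
    (f : Fin m → Fin n → Tile) (c : ℕ) (hc : c < n)
    (hsh : ShapeT c (tilesOf f ⟨m - 1, Nat.sub_lt hm Nat.one_pos⟩)) :
    ∀ r j, j < n → lineState m n β f r j = lineState m n β' (Ff m n f) r j := by
  intro r
  induction r with
  | zero => intro j _; rfl
  | succ r ih =>
    intro j hj
    by_cases hr : r < m
    · simp only [lineState, dif_pos hr]
      rcases Nat.eq_zero_or_pos r with rfl | hr1
      · simp only [Nat.sub_zero]
        rw [show (β ⟨m - 1, by omega⟩) = true from hβi,
          show (β' ⟨m - 1, by omega⟩) = false from hβ'i]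
        rw [rowTop_shapeT hsh _ _ j,
          rowTop_shapeB hn hc (shapeB_of_shapeT (by simp; omega) hc hsh) _ _ j hj]
      · have hii : ((⟨m - 1 - r, by omega⟩ : Fin m) : ℕ) + 1 ≠ m := by simp; omega
        rw [← hpre _ hii, tilesOf_Ff_ne f _ hii]
        exact rowTop_congr _ n hn _ _ _ _ j hj (fun k hk => ih k hk)
    · simp only [lineState, dif_neg hr]; exact ih j hj

lemma isHGPD_Ff {m n : ℕ} (β β' : Fin m → Bool)
    (hbot : ∀ i : Fin m, (i : ℕ) + 1 = m → β' i = !β i)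
    (hpre : ∀ i : Fin m, (i : ℕ) + 1 ≠ m → β i = β' i)
    {f : Fin m → Fin n → Tile} (hf : IsHGPD m n β f) : IsHGPD m n β' (Ff m n f) := by
  obtain ⟨hall, hEW, hNS, hS, hW, hE⟩ := hf
  have hquad : ∀ (i : Fin m), (i : ℕ) + 1 = m → ∀ j, Quad (f i j) :=
    fun i hi j => quad_of_allowed (hall i j) (hS i j hi)
  refine ⟨?_, ?_, ?_, ?_, ?_, ?_⟩
  · intro i j
    by_cases hi : (i : ℕ) + 1 = m
    · rw [Ff_bot m n f i hi, hbot i hi]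
      exact allowed_g (hall i j) (hS i j hi)
    · rw [congrFun (Ff_ne m n f i hi) j, ← hpre i hi]
      exact hall i j
  · intro i j h
    by_cases hi : (i : ℕ) + 1 = m
    · rw [Ff_bot m n f i hi, Ff_bot m n f i hi, occE_g (hquad i hi j),
        occW_g (hquad i hi _), hEW i j h]
    · rw [congrFun (Ff_ne m n f i hi) j, congrFun (Ff_ne m n f i hi) _]
      exact hEW i j h
  · intro i h j
    have hi : (i : ℕ) + 1 ≠ m := by omega
    rw [congrFun (Ff_ne m n f i hi) j]
    by_cases hi2 : ((⟨(i : ℕ) + 1, h⟩ : Fin m) : ℕ) + 1 = m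
    · rw [Ff_bot m n f _ hi2, occN_g (hquad _ hi2 j)]
      exact hNS i h j
    · rw [congrFun (Ff_ne m n f _ hi2) j]
      exact hNS i h j
  · intro i j hi
    rw [Ff_bot m n f i hi, occS_g (hquad i hi j)]
    exact hS i j hi
  · intro i j hj
    by_cases hi : (i : ℕ) + 1 = m
    · rw [Ff_bot m n f i hi, occW_g (hquad i hi j), hW i j hj, hbot i hi]
    · rw [congrFun (Ff_ne m n f i hi) j, hW i j hj, hpre i hi]
  · intro i j hj
    by_cases hi : (i : ℕ) + 1 = m
    · rw [Ff_bot m n f i hi, occE_g (hquad i hi j), hE i j hj, hbot i hi, Bool.not_not]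
    · rw [congrFun (Ff_ne m n f i hi) j, hE i j hj, hpre i hi]

lemma pipeNo_eq (m : ℕ) (hm : 1 ≤ m) (β β' : Fin m → Bool)
    (hβi : β ⟨m - 1, Nat.sub_lt hm Nat.one_pos⟩ = true)
    (hβ'i : β' ⟨m - 1, Nat.sub_lt hm Nat.one_pos⟩ = false)
    (hpre : ∀ i : Fin m, (i : ℕ) + 1 ≠ m → β i = β' i) : pipeNo β = pipeNo β' := by
  set iL : Fin m := ⟨m - 1, Nat.sub_lt hm Nat.one_pos⟩ with hiL
  have hL : ∀ a : Fin m, a ≠ iL → β a = β' a := by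
    intro a ha
    apply hpre
    intro h
    exact ha (Fin.ext (by simp [hiL]; omega))
  have hle : ∀ a : Fin m, a ≤ iL := fun a => by
    rw [Fin.le_def]; simp [hiL]; omega
  funext i
  unfold pipeNo
  by_cases hii : i = iL
  · have hb1 : β i = true := by rw [hii]; exact hβi
    have hb2 : β' i = false := by rw [hii]; exact hβ'i
    rw [dif_pos hb1, dif_neg (by simp [hb2])]
    apply Fin.ext
    simp only
    have e1 : (Finset.univ.filter (fun a : Fin m => a < i ∧ β a)) =
        Finset.univ.filter (fun a : Fin m => (β' a : Prop)) := by
      ext a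
      simp only [Finset.mem_filter, Finset.mem_univ, true_and]
      constructor
      · rintro ⟨h1, h2⟩
        have hne : a ≠ iL := by rw [← hii]; exact ne_of_lt h1
        rw [← hL a hne]; exact h2
      · intro h1
        have hne : a ≠ i := by
          rintro rfl; rw [hb2] at h1; exact absurd h1 (by simp)
        have hne2 : a ≠ iL := by rw [← hii]; exact hne
        exact ⟨lt_of_le_of_ne (by rw [hii]; exact hle a) hne, by rw [hL a hne2]; exact h1⟩
    have e2 : (Finset.univ.filter (fun a : Fin m => i < a ∧ ¬(β' a : Prop))) = ∅ := by
      rw [Finset.filter_eq_empty_iff]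
      rintro a - ⟨h1, -⟩
      exact absurd h1 (not_lt.mpr (by rw [hii]; exact hle a))
    rw [e1, e2]
    simp
  · have hlt : i < iL := lt_of_le_of_ne (hle i) hii
    have hbb : β i = β' i := hL i hii
    by_cases hb : β i = true
    · rw [dif_pos hb, dif_pos (by rw [← hbb]; exact hb)]
      apply Fin.ext
      simp only
      congr 1
      ext a
      simp only [Finset.mem_filter, Finset.mem_univ, true_and]
      exact and_congr_right fun h1 => by rw [hL a (ne_of_lt (lt_trans h1 hlt))]
    · rw [dif_neg hb, dif_neg (by rwa [← hbb])]
      apply Fin.ext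
      simp only
      have e1 : (Finset.univ.filter (fun a : Fin m => (β a : Prop))) =
          insert iL (Finset.univ.filter (fun a : Fin m => (β' a : Prop))) := by
        ext a
        simp only [Finset.mem_filter, Finset.mem_univ, true_and, Finset.mem_insert]
        constructor
        · intro h
          by_cases ha : a = iL
          · exact Or.inl ha
          · exact Or.inr (hL a ha ▸ h)
        · rintro (rfl | h)
          · exact hβi
          · have ha : a ≠ iL := by rintro rfl; rw [hβ'i] at h; exact absurd h (by simp)
            rw [hL a ha]; exact h
      have e2 : (Finset.univ.filter (fun a : Fin m => i < a ∧ ¬(β' a : Prop))) =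
          insert iL (Finset.univ.filter (fun a : Fin m => i < a ∧ ¬(β a : Prop))) := by
        ext a
        simp only [Finset.mem_filter, Finset.mem_univ, true_and, Finset.mem_insert]
        constructor
        · rintro ⟨h1, h2⟩
          by_cases ha : a = iL
          · exact Or.inl ha
          · exact Or.inr ⟨h1, by rw [hL a ha]; exact h2⟩
        · rintro (rfl | ⟨h1, h2⟩)
          · exact ⟨hlt, by rw [hβ'i]; simp⟩
          · have ha : a ≠ iL := by rintro rfl; rw [hβi] at h2; exact absurd rfl h2
            exact ⟨h1, by rw [← hL a ha]; exact h2⟩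
      have c1 : (Finset.univ.filter (fun a : Fin m => (β a : Prop))).card =
          (Finset.univ.filter (fun a : Fin m => (β' a : Prop))).card + 1 := by
        rw [e1, Finset.card_insert_of_notMem (by simp [hβ'i])]
      have c2 : (Finset.univ.filter (fun a : Fin m => i < a ∧ ¬(β' a : Prop))).card =
          (Finset.univ.filter (fun a : Fin m => i < a ∧ ¬(β a : Prop))).card + 1 := by
        rw [e2, Finset.card_insert_of_notMem (by simp [hβi])]
      omega

lemma tileWt_g (m n : ℕ) (rt : Bool) {t : Tile} (h : Quad t) (k : Fin m) (j : Fin n) :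
    tileWt m n (!rt) (g t) k j = tileWt m n rt t k j := by
  cases rt <;> rcases h with rfl | rfl | rfl | rfl <;>
    simp [tileWt, g, Tile.isElbow, Tile.isStraight]

lemma pdWeight_Ff (m n : ℕ) (β β' : Fin m → Bool)
    (hbot : ∀ i : Fin m, (i : ℕ) + 1 = m → β' i = !β i)
    (hpre : ∀ i : Fin m, (i : ℕ) + 1 ≠ m → β i = β' i)
    (hpn : pipeNo β = pipeNo β')
    {f : Fin m → Fin n → Tile} (hf : IsHGPD m n β f) :
    pdWeight m n β' (Ff m n f) = pdWeight m n β f := by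
  obtain ⟨hall, -, -, hS, -, -⟩ := hf
  unfold pdWeight
  refine Finset.prod_congr rfl fun i _ => Finset.prod_congr rfl fun j _ => ?_
  rw [← hpn]
  by_cases hi : (i : ℕ) + 1 = m
  · rw [Ff_bot m n f i hi, hbot i hi]
    exact tileWt_g m n (β i) (quad_of_allowed (hall i j) (hS i j hi)) _ j
  · rw [congrFun (Ff_ne m n f i hi) j, ← hpre i hi]

lemma conn_Ff (m n : ℕ) (hm : 1 ≤ m) (hn : 1 ≤ n) (β β' : Fin m → Bool)
    (hβi : β ⟨m - 1, Nat.sub_lt hm Nat.one_pos⟩ = true)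
    (hβ'i : β' ⟨m - 1, Nat.sub_lt hm Nat.one_pos⟩ = false)
    (hpre : ∀ i : Fin m, (i : ℕ) + 1 ≠ m → β i = β' i)
    (π : Fin m ↪ Fin n) {f : Fin m → Fin n → Tile} (hf : IsHGPD m n β f) :
    Connectivity m n β f π ↔ Connectivity m n β' (Ff m n f) π := by
  obtain ⟨c, hc, hsh⟩ := shapeT_of_HGPD hn hf ⟨m - 1, Nat.sub_lt hm Nat.one_pos⟩
    (by simp; omega) hβi
  have hNE : ∀ x : Fin n, northExit m n β f x = northExit m n β' (Ff m n f) x :=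
    fun x => lineState_eq m n hm hn β β' hβi hβ'i hpre f c hc hsh m x x.isLt
  have hpn := pipeNo_eq m hm β β' hβi hβ'i hpre
  unfold Connectivity
  constructor <;> intro h i
  · rw [← hpn, ← hNE _]; exact h i
  · rw [hpn, hNE _]; exact h i

end HGPDaux

/-- Lemma: `G_π^β` does not depend on the last letter of `β`. -/
theorem GPD_independent_of_last_letter (m n : ℕ) (hm : 1 ≤ m) (hmn : m ≤ n)
    (β β' : Fin m → Bool)
    (hβ : ∀ i : Fin m, (i : ℕ) + 1 = m → β i = true)
    (hβ' : ∀ i : Fin m, (i : ℕ) + 1 = m → β' i = false)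
    (hpre : ∀ i : Fin m, (i : ℕ) + 1 ≠ m → β i = β' i)
    (π : Fin m ↪ Fin n) :
    GPD m n β π = GPD m n β' π := by
  classical
  have hn : 1 ≤ n := le_trans hm hmn
  have hlt : m - 1 < m := Nat.sub_lt hm Nat.one_pos
  have hβi : β ⟨m - 1, hlt⟩ = true := hβ _ (by simp; omega)
  have hβ'i : β' ⟨m - 1, hlt⟩ = false := hβ' _ (by simp; omega)
  have hbot : ∀ i : Fin m, (i : ℕ) + 1 = m → β' i = !β i := by
    intro i hi; rw [hβ' i hi, hβ i hi]; rfl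
  have hbot' : ∀ i : Fin m, (i : ℕ) + 1 = m → β i = !β' i := by
    intro i hi; rw [hβ' i hi, hβ i hi]; rfl
  have hpre' : ∀ i : Fin m, (i : ℕ) + 1 ≠ m → β' i = β i := fun i hi => (hpre i hi).symm
  have hpn := HGPDaux.pipeNo_eq m hm β β' hβi hβ'i hpre
  unfold GPD
  refine Finset.sum_nbij' (i := fun f => HGPDaux.Ff m n f) (j := fun f => HGPDaux.Ff m n f)
    ?_ ?_ ?_ ?_ ?_
  · intro f hfmem
    simp only [Finset.mem_filter, Finset.mem_univ, true_and] at hfmem ⊢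
    obtain ⟨h1, h2⟩ := hfmem
    exact ⟨HGPDaux.isHGPD_Ff β β' hbot hpre h1,
      (HGPDaux.conn_Ff m n hm hn β β' hβi hβ'i hpre π h1).mp h2⟩
  · intro f hfmem
    simp only [Finset.mem_filter, Finset.mem_univ, true_and] at hfmem ⊢
    obtain ⟨h1, h2⟩ := hfmem
    have h1' : IsHGPD m n β (HGPDaux.Ff m n f) := HGPDaux.isHGPD_Ff β' β hbot' hpre' h1
    refine ⟨h1', ?_⟩
    exact (HGPDaux.conn_Ff m n hm hn β β' hβi hβ'i hpre π h1').mpr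
      (by rw [HGPDaux.Ff_invol]; exact h2)
  · intro f _; exact HGPDaux.Ff_invol m n f
  · intro f _; exact HGPDaux.Ff_invol m n f
  · intro f hfmem
    simp only [Finset.mem_filter, Finset.mem_univ, true_and] at hfmem
    exact (HGPDaux.pdWeight_Ff m n β β' hbot hpre hpn hfmem.1).symm
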